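/- Let F : [0,∞) → (0,∞) be a right-continuous decreasing function of bounded variation with left limits F_{s−}, and let dF denote its Lebesgue–Stieltjes (signed, nonpositive) measure. Then for 0 < u ≤ t, −∫_{[u,t]} (F_s F_{s−})^{-1} dF_s = 1/F_t − 1/F_{u−}. -/

import Mathlib

open MeasureTheory Function Set
open scoped ENNReal

/-- Stieltjes change-of-variables identity: for a strictly positive, right-continuous
decreasing function `F` of bounded variation (right continuity and bounded variation are
encoded by the Stieltjes function `G = -F`, so that `dG = -dF` where
`dF([a,b]) = F_b - F_{a-}`), one has, for `0 < u ≤ t`,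
`-∫_{[u,t]} (F_s F_{s-})⁻¹ dF_s = 1/F_t - 1/F_{u-}`. -/
theorem stmt14 (F : ℝ → ℝ) (hFanti : Antitone F) (hFpos : ∀ s, 0 < F s)
    (G : StieltjesFunction ℝ) (hG : ∀ x, G x = -F x)
    (u t : ℝ) (hu : 0 < u) (hut : u ≤ t) :
    ∫ s in Icc u t, (F s * leftLim F s)⁻¹ ∂G.measure
      = 1 / F t - 1 / leftLim F u := by
  have hFmeas : Measurable F := hFanti.measurable
  have hL : Antitone (leftLim F) := hFanti.leftLim
  have hLmeas : Measurable (leftLim F) := hL.measurable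
  have hFleL : ∀ s, F s ≤ leftLim F s := fun s => hFanti.le_leftLim le_rfl
  have hLpos : ∀ s, 0 < leftLim F s := fun s => (hFpos s).trans_le (hFleL s)
  -- F is right continuous
  have hGF : ∀ x, F x = -(G x) := fun x => by rw [hG, neg_neg]
  have hFright : ∀ x, ContinuousWithinAt F (Ici x) x := by
    intro x
    have h1 : ContinuousWithinAt (fun y => -(G y)) (Ici x) x := (G.right_continuous x).neg
    have : F = fun y => -(G y) := funext fun y => hGF y
    rw [this]; exact h1
  -- the Stieltjes function H = 1/F
  set H : StieltjesFunction ℝ :=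
    { toFun := fun x => (F x)⁻¹
      mono' := fun x y hxy => inv_anti₀ (hFpos y) (hFanti hxy)
      right_continuous' := fun x => (hFright x).inv₀ (hFpos x).ne' } with hHdef
  have hHcoe : ⇑H = fun y => (F y)⁻¹ := rfl
  have hH_leftLim : ∀ x : ℝ, leftLim (⇑H) x = (leftLim F x)⁻¹ := by
    intro x
    rw [hHcoe]
    refine leftLim_eq_of_tendsto ?_
    exact (hFanti.tendsto_leftLim x).inv₀ (hLpos x).ne'
  -- values of the measure of G
  have hμIoc : ∀ a b : ℝ, G.measure (Ioc a b) = ENNReal.ofReal (F a - F b) := by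
    intro a b
    rw [G.measure_Ioc]; congr 1; rw [hG, hG]; ring
  -- densities
  set d₁ : ℝ → ℝ≥0∞ := fun s => ENNReal.ofReal (leftLim F s)⁻¹ with hd₁
  set d₂ : ℝ → ℝ≥0∞ := fun s => ENNReal.ofReal (F s) with hd₂
  have hd₁meas : Measurable d₁ := hLmeas.inv.ennreal_ofReal
  have hd₂meas : Measurable d₂ := hFmeas.ennreal_ofReal
  -- the key Fubini identity on Ioc intervals
  have key : ∀ a b : ℝ, a < b →
      ∫⁻ s in Ioc a b, d₁ s ∂G.measure = ∫⁻ s in Ioc a b, d₂ s ∂H.measure := by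
    intro a b hab
    set m := G.measure.restrict (Ioc a b) with hm
    set n := H.measure.restrict (Ioc a b) with hn
    have hm_univ : m univ = ENNReal.ofReal (F a - F b) := by
      rw [hm, Measure.restrict_apply_univ, hμIoc]
    have hn_univ : n univ = ENNReal.ofReal ((F b)⁻¹ - (F a)⁻¹) := by
      rw [hn, Measure.restrict_apply_univ, H.measure_Ioc]
    haveI : IsFiniteMeasure m := ⟨by rw [hm_univ]; exact ENNReal.ofReal_lt_top⟩
    haveI : IsFiniteMeasure n := ⟨by rw [hn_univ]; exact ENNReal.ofReal_lt_top⟩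
    have hS : MeasurableSet {p : ℝ × ℝ | p.2 < p.1} :=
      measurableSet_lt measurable_snd measurable_fst
    -- Fubini on the two halves of the square
    have hsplit : (m.prod n) {p : ℝ × ℝ | p.2 < p.1} + (m.prod n) {p : ℝ × ℝ | p.2 < p.1}ᶜ
        = m univ * n univ := by
      rw [measure_add_measure_compl hS, ← univ_prod_univ, Measure.prod_prod]
    have hE1 : (m.prod n) {p : ℝ × ℝ | p.2 < p.1}
        = ∫⁻ x in Ioc a b, ENNReal.ofReal ((leftLim F x)⁻¹ - (F a)⁻¹) ∂G.measure := by
      rw [Measure.prod_apply hS]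
      have : ∀ x : ℝ, Prod.mk x ⁻¹' {p : ℝ × ℝ | p.2 < p.1} = Iio x := fun x => rfl
      simp_rw [this]
      rw [hm]
      refine setLIntegral_congr_fun measurableSet_Ioc (fun x hx => ?_)
      rw [hn, Measure.restrict_apply measurableSet_Iio]
      have hset : Iio x ∩ Ioc a b = Ioo a x := by
        ext z
        simp only [mem_inter_iff, mem_Iio, mem_Ioc, mem_Ioo]
        exact ⟨fun h => ⟨h.2.1, h.1⟩, fun h => ⟨h.2, h.1, (le_of_lt h.2).trans hx.2⟩⟩
      rw [hset, H.measure_Ioo, hH_leftLim]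
    have hE2 : (m.prod n) {p : ℝ × ℝ | p.2 < p.1}ᶜ
        = ∫⁻ y in Ioc a b, ENNReal.ofReal (F a - F y) ∂H.measure := by
      rw [Measure.prod_apply_symm hS.compl]
      have hpre : ∀ y : ℝ, (fun x => (x, y)) ⁻¹' {p : ℝ × ℝ | p.2 < p.1}ᶜ = Iic y := by
        intro y; ext x
        simp only [mem_preimage, mem_compl_iff, mem_setOf_eq, not_lt, mem_Iic]
      simp_rw [hpre]
      rw [hn]
      refine setLIntegral_congr_fun measurableSet_Ioc (fun y hy => ?_)
      rw [hm, Measure.restrict_apply measurableSet_Iic]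
      have hset : Iic y ∩ Ioc a b = Ioc a y := by
        ext z
        simp only [mem_inter_iff, mem_Iic, mem_Ioc]
        exact ⟨fun h => ⟨h.2.1, h.1⟩, fun h => ⟨h.2, h.1, h.2.trans hy.2⟩⟩
      rw [hset, hμIoc]
    -- rewrite the two integrals
    have hA : ∫⁻ s in Ioc a b, d₁ s ∂G.measure
        = (∫⁻ x in Ioc a b, ENNReal.ofReal ((leftLim F x)⁻¹ - (F a)⁻¹) ∂G.measure)
          + ENNReal.ofReal (F a)⁻¹ * ENNReal.ofReal (F a - F b) := by
      have hptw : ∀ x ∈ Ioc a b,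
          d₁ x = ENNReal.ofReal ((leftLim F x)⁻¹ - (F a)⁻¹) + ENNReal.ofReal (F a)⁻¹ := by
        intro x hx
        rw [hd₁, ← ENNReal.ofReal_add (by
          have : leftLim F x ≤ F a := hFanti.leftLim_le hx.1
          have := inv_anti₀ (hLpos x) this
          linarith) (inv_nonneg.2 (hFpos a).le)]
        norm_num
      rw [setLIntegral_congr_fun measurableSet_Ioc hptw,
        lintegral_add_right _ measurable_const]
      congr 1
      rw [setLIntegral_const, hμIoc]
    have hB : ENNReal.ofReal (F a) * ENNReal.ofReal ((F b)⁻¹ - (F a)⁻¹)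
        = (∫⁻ y in Ioc a b, ENNReal.ofReal (F a - F y) ∂H.measure)
          + ∫⁻ s in Ioc a b, d₂ s ∂H.measure := by
      have hptw : ∀ y ∈ Ioc a b,
          (fun _ : ℝ => ENNReal.ofReal (F a)) y
            = ENNReal.ofReal (F a - F y) + d₂ y := by
        intro y hy
        rw [hd₂, ← ENNReal.ofReal_add (by
          have : F y ≤ F a := hFanti hy.1.le
          linarith) (hFpos y).le]
        norm_num
      rw [← lintegral_add_right _ hd₂meas,
        ← setLIntegral_congr_fun measurableSet_Ioc hptw,
        setLIntegral_const, H.measure_Ioc]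
    -- combine
    have hR : ENNReal.ofReal (F a - F b) * ENNReal.ofReal ((F b)⁻¹ - (F a)⁻¹)
        + ENNReal.ofReal (F a)⁻¹ * ENNReal.ofReal (F a - F b)
        = ENNReal.ofReal (F a) * ENNReal.ofReal ((F b)⁻¹ - (F a)⁻¹) := by
      have h1 : (0:ℝ) ≤ F a - F b := by have := hFanti hab.le; linarith
      have h2 : (0:ℝ) ≤ (F b)⁻¹ - (F a)⁻¹ := by
        have := inv_anti₀ (hFpos b) (hFanti hab.le); linarith
      rw [← ENNReal.ofReal_mul h1, ← ENNReal.ofReal_mul (inv_nonneg.2 (hFpos a).le),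
        ← ENNReal.ofReal_add (mul_nonneg h1 h2) (mul_nonneg (inv_nonneg.2 (hFpos a).le) h1),
        ← ENNReal.ofReal_mul (hFpos a).le]
      congr 1
      have hFa : F a ≠ 0 := (hFpos a).ne'
      have hFb : F b ≠ 0 := (hFpos b).ne'
      field_simp
      ring
    have hfin : ENNReal.ofReal (F a) * ENNReal.ofReal ((F b)⁻¹ - (F a)⁻¹) ≠ ⊤ :=
      (ENNReal.mul_lt_top ENNReal.ofReal_lt_top ENNReal.ofReal_lt_top).ne
    have hmain : (∫⁻ s in Ioc a b, d₁ s ∂G.measure)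
        + ENNReal.ofReal (F a) * ENNReal.ofReal ((F b)⁻¹ - (F a)⁻¹)
        = (∫⁻ s in Ioc a b, d₂ s ∂H.measure)
          + ENNReal.ofReal (F a) * ENNReal.ofReal ((F b)⁻¹ - (F a)⁻¹) := by
      calc (∫⁻ s in Ioc a b, d₁ s ∂G.measure)
          + ENNReal.ofReal (F a) * ENNReal.ofReal ((F b)⁻¹ - (F a)⁻¹)
          = ((∫⁻ x in Ioc a b, ENNReal.ofReal ((leftLim F x)⁻¹ - (F a)⁻¹) ∂G.measure)
              + ENNReal.ofReal (F a)⁻¹ * ENNReal.ofReal (F a - F b))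
            + ((∫⁻ y in Ioc a b, ENNReal.ofReal (F a - F y) ∂H.measure)
              + ∫⁻ s in Ioc a b, d₂ s ∂H.measure) := by rw [← hA, ← hB]
        _ = ((∫⁻ x in Ioc a b, ENNReal.ofReal ((leftLim F x)⁻¹ - (F a)⁻¹) ∂G.measure)
              + (∫⁻ y in Ioc a b, ENNReal.ofReal (F a - F y) ∂H.measure))
            + (ENNReal.ofReal (F a)⁻¹ * ENNReal.ofReal (F a - F b)
              + ∫⁻ s in Ioc a b, d₂ s ∂H.measure) := by ring
        _ = (m univ * n univ)
            + (ENNReal.ofReal (F a)⁻¹ * ENNReal.ofReal (F a - F b)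
              + ∫⁻ s in Ioc a b, d₂ s ∂H.measure) := by rw [← hE1, ← hE2, hsplit]
        _ = (∫⁻ s in Ioc a b, d₂ s ∂H.measure)
            + (ENNReal.ofReal (F a - F b) * ENNReal.ofReal ((F b)⁻¹ - (F a)⁻¹)
              + ENNReal.ofReal (F a)⁻¹ * ENNReal.ofReal (F a - F b)) := by
            rw [hm_univ, hn_univ]; ring
        _ = (∫⁻ s in Ioc a b, d₂ s ∂H.measure)
            + ENNReal.ofReal (F a) * ENNReal.ofReal ((F b)⁻¹ - (F a)⁻¹) := by rw [hR]
    exact ENNReal.add_left_inj hfin |>.mp hmain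
  -- the measures with densities agree
  have hkeyMeas : G.measure.withDensity d₁ = H.measure.withDensity d₂ := by
    refine Measure.ext_of_Ioc' _ _ (fun a b hab => ?_) (fun a b hab => ?_)
    · rw [withDensity_apply _ measurableSet_Ioc]
      have hbound : ∫⁻ s in Ioc a b, d₁ s ∂G.measure
          ≤ ∫⁻ _ in Ioc a b, ENNReal.ofReal (F b)⁻¹ ∂G.measure := by
        refine setLIntegral_mono measurable_const fun x hx => ?_
        refine ENNReal.ofReal_le_ofReal ?_
        exact inv_anti₀ (hFpos b) ((hFanti hx.2).trans (hFleL x))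
      refine ne_top_of_le_ne_top ?_ hbound
      rw [setLIntegral_const, hμIoc]
      exact (ENNReal.mul_lt_top ENNReal.ofReal_lt_top ENNReal.ofReal_lt_top).ne
    · rw [withDensity_apply _ measurableSet_Ioc, withDensity_apply _ measurableSet_Ioc]
      exact key a b hab
  -- compute the lintegral over Icc u t
  have hInt : ∫⁻ s in Icc u t, ENNReal.ofReal ((F s * leftLim F s)⁻¹) ∂G.measure
      = ENNReal.ofReal ((F t)⁻¹ - (leftLim F u)⁻¹) := by
    have hstep1 : ∫⁻ s in Icc u t, ENNReal.ofReal ((F s * leftLim F s)⁻¹) ∂G.measure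
        = ∫⁻ s in Icc u t, (d₁ * fun s => ENNReal.ofReal (F s)⁻¹) s ∂G.measure := by
      refine setLIntegral_congr_fun measurableSet_Icc (fun s _ => ?_)
      simp only [Pi.mul_apply, hd₁]
      rw [mul_inv, ENNReal.ofReal_mul (inv_nonneg.2 (hFpos s).le), mul_comm]
    have hstep2 : ∫⁻ s in Icc u t, (d₁ * fun s => ENNReal.ofReal (F s)⁻¹) s ∂G.measure
        = ∫⁻ s, ENNReal.ofReal (F s)⁻¹
            ∂((G.measure.restrict (Icc u t)).withDensity d₁) := by
      rw [lintegral_withDensity_eq_lintegral_mul _ hd₁meas (show Measurable fun s => ENNReal.ofReal (F s)⁻¹ from hFmeas.inv.ennreal_ofReal)]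
    have hstep3 : (G.measure.restrict (Icc u t)).withDensity d₁
        = (H.measure.restrict (Icc u t)).withDensity d₂ := by
      rw [← restrict_withDensity measurableSet_Icc, ← restrict_withDensity measurableSet_Icc,
        hkeyMeas]
    have hstep4 : ∫⁻ s, ENNReal.ofReal (F s)⁻¹
          ∂((H.measure.restrict (Icc u t)).withDensity d₂)
        = ∫⁻ s in Icc u t, (d₂ * fun s => ENNReal.ofReal (F s)⁻¹) s ∂H.measure := by
      rw [lintegral_withDensity_eq_lintegral_mul _ hd₂meas (show Measurable fun s => ENNReal.ofReal (F s)⁻¹ from hFmeas.inv.ennreal_ofReal)]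
    have hstep5 : ∫⁻ s in Icc u t, (d₂ * fun s => ENNReal.ofReal (F s)⁻¹) s ∂H.measure
        = ∫⁻ _ in Icc u t, (1 : ℝ≥0∞) ∂H.measure := by
      refine setLIntegral_congr_fun measurableSet_Icc (fun s _ => ?_)
      simp only [Pi.mul_apply, hd₂]
      rw [← ENNReal.ofReal_mul (hFpos s).le, mul_inv_cancel₀ (hFpos s).ne', ENNReal.ofReal_one]
    rw [hstep1, hstep2, hstep3, hstep4, hstep5, setLIntegral_const, one_mul,
      H.measure_Icc, hH_leftLim]
  -- convert the Bochner integral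
  have hnn : 0 ≤ᵐ[G.measure.restrict (Icc u t)] fun s => (F s * leftLim F s)⁻¹ :=
    Filter.Eventually.of_forall fun s => inv_nonneg.2 (mul_nonneg (hFpos s).le (hLpos s).le)
  have hmeas : AEStronglyMeasurable (fun s => (F s * leftLim F s)⁻¹)
      (G.measure.restrict (Icc u t)) :=
    ((hFmeas.mul hLmeas).inv).aestronglyMeasurable
  rw [integral_eq_lintegral_of_nonneg_ae hnn hmeas, hInt, ENNReal.toReal_ofReal (by
    have h1 : F t ≤ leftLim F u := (hFanti hut).trans (hFleL u)
    have := inv_anti₀ (hFpos t) h1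
    linarith)]
  rw [one_div, one_div]
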